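/- arXiv:2508.17821 — 2 statements merged into one kernel-verified Lean document; each statement's English description precedes it below -/
import Mathlib

section
/- Let F : ℝ → ℝ be differentiable and strictly positive, let l ∈ ℝ^L, and define α_i(l) = F(l_i)/∑_{j=1}^L F(l_j). Let m = min_j F(l_j), ‖F‖ = max_j |F(l_j)|, ‖F'‖ = max_j |F'(l_j)|. Then every partial derivative satisfies |∂α_i/∂l_k| ≤ ‖F'‖·(1/(L·m) + ‖F‖/(L²·m²)). -/
theorem general_normalization_jacobian_bound
    (F : ℝ → ℝ) (hF : Differentiable ℝ F) (hFpos : ∀ x, 0 < F x)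
    (L : ℕ) (hL : 0 < L) (l : Fin L → ℝ)
    (m : ℝ) (hm0 : 0 < m) (hm : ∀ j, m ≤ F (l j))
    (Fmax : ℝ) (hFmax : ∀ j, |F (l j)| ≤ Fmax)
    (F'max : ℝ) (hF'max : ∀ j, |deriv F (l j)| ≤ F'max)
    (i k : Fin L) :
    |deriv (fun t : ℝ =>
        F (Function.update l k t i) / ∑ j, F (Function.update l k t j)) (l k)|
      ≤ F'max * (1 / (L * m) + Fmax / (L ^ 2 * m ^ 2)) := by
  set dN : ℝ := if i = k then deriv F (l k) else 0 with hdN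
  have hterm : ∀ j : Fin L, HasDerivAt (fun t => F (Function.update l k t j))
      (if j = k then deriv F (l k) else 0) (l k) := by
    intro j
    by_cases h : j = k
    · subst h
      have : (fun t => F (Function.update l j t j)) = F := by
        funext t; simp
      rw [if_pos rfl, this]
      exact (hF (l j)).hasDerivAt
    · simp only [if_neg h, Function.update_apply, if_neg h]
      exact hasDerivAt_const (l k) (F (l j))
  have hN : HasDerivAt (fun t => F (Function.update l k t i)) dN (l k) := hterm i
  have hS : HasDerivAt (fun t => ∑ j, F (Function.update l k t j))
      (deriv F (l k)) (l k) := by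
    have := HasDerivAt.fun_sum (fun j (_ : j ∈ Finset.univ) => hterm j)
    simpa using this
  set S0 : ℝ := ∑ j, F (l j) with hS0def
  have hLm : (0:ℝ) < (L:ℝ) * m := by positivity
  have hS0ge : (L:ℝ) * m ≤ S0 := by
    have : ∑ _j : Fin L, m ≤ S0 := Finset.sum_le_sum (fun j _ => hm j)
    simpa using this
  have hS0pos : 0 < S0 := lt_of_lt_of_le hLm hS0ge
  have hSval : (∑ j, F (Function.update l k (l k) j)) = S0 := by
    simp [Function.update_eq_self]; rfl
  have hSne : (∑ j, F (Function.update l k (l k) j)) ≠ 0 := by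
    rw [hSval]; exact ne_of_gt hS0pos
  have hdiv := hN.fun_div hS hSne
  rw [hdiv.deriv]
  rw [hSval]
  have hNval : F (Function.update l k (l k) i) = F (l i) := by
    simp [Function.update_eq_self]
  rw [hNval]
  have hF'nonneg : 0 ≤ F'max := le_trans (abs_nonneg _) (hF'max k)
  have hFnonneg : 0 ≤ Fmax := le_trans (abs_nonneg _) (hFmax k)
  have hdNbound : |dN| ≤ F'max := by
    rw [hdN]; split
    · exact hF'max k
    · simpa using hF'nonneg
  have key : (dN * S0 - F (l i) * deriv F (l k)) / S0 ^ 2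
      = dN / S0 - F (l i) * deriv F (l k) / S0 ^ 2 := by
    field_simp
  rw [key]
  have h1 : |dN / S0| ≤ F'max / ((L:ℝ) * m) := by
    rw [abs_div, abs_of_pos hS0pos]
    exact div_le_div₀ hF'nonneg hdNbound hLm hS0ge
  have h2 : |F (l i) * deriv F (l k) / S0 ^ 2| ≤ Fmax * F'max / (((L:ℝ) * m) ^ 2) := by
    rw [abs_div, abs_of_pos (by positivity : (0:ℝ) < S0 ^ 2), abs_mul]
    refine div_le_div₀ (by positivity) ?_ (by positivity) ?_
    · exact mul_le_mul (hFmax i) (hF'max k) (abs_nonneg _) hFnonneg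
    · exact pow_le_pow_left₀ (le_of_lt hLm) hS0ge 2
  calc |dN / S0 - F (l i) * deriv F (l k) / S0 ^ 2|
      ≤ |dN / S0| + |F (l i) * deriv F (l k) / S0 ^ 2| := abs_sub _ _
    _ ≤ F'max / ((L:ℝ) * m) + Fmax * F'max / (((L:ℝ) * m) ^ 2) := add_le_add h1 h2
    _ = F'max * (1 / (L * m) + Fmax / (L ^ 2 * m ^ 2)) := by
        rw [mul_pow]; ring
end

section
/- Let x₁,…,x_N lie on the sphere of radius M in ℝ^d with pairwise distances at least δ > 0, and let α_j = 1/N for all j (uniform weights). Fix i and let ξ_i be defined by ξ_i² = M²·(N−1)/N² + (M² − δ²/2)·(N−1)(N−2)/N². Then ‖(1/N)∑_{j≠i} x_j‖₂ ≤ ξ_i, and as N → ∞, ξ_i² → M² − δ²/2. -/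
open Filter

theorem uniform_weights_spread_bound
    (d N : ℕ) (x : Fin N → EuclideanSpace ℝ (Fin d))
    (M δ : ℝ) (hδ : 0 < δ)
    (hM : ∀ j, ‖x j‖ = M)
    (hsep : ∀ j k, j ≠ k → δ ≤ ‖x j - x k‖)
    (i : Fin N) (ξ : ℝ) (hξ0 : 0 ≤ ξ)
    (hξ : ξ ^ 2 = M ^ 2 * (N - 1) / N ^ 2 +
      (M ^ 2 - δ ^ 2 / 2) * ((N - 1) * (N - 2)) / N ^ 2) :
    ‖(1 / (N : ℝ)) • ∑ j ∈ Finset.univ.erase i, x j‖ ≤ ξ ∧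
    Tendsto (fun n : ℕ => M ^ 2 * (n - 1) / n ^ 2 +
        (M ^ 2 - δ ^ 2 / 2) * ((n - 1) * (n - 2)) / n ^ 2)
      atTop (nhds (M ^ 2 - δ ^ 2 / 2)) := by
  have hN : 0 < N := i.pos
  constructor
  · set E := Finset.univ.erase i with hE
    set S := ∑ j ∈ E, x j with hS
    have hcard : E.card = N - 1 := by
      simp [hE, Finset.card_erase_of_mem]
    have hinner : ∀ j k : Fin N, j ≠ k →
        (inner ℝ (x j) (x k) : ℝ) ≤ M ^ 2 - δ ^ 2 / 2 := by
      intro j k hjk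
      have h1 : ‖x j - x k‖ ^ 2 =
          ‖x j‖ ^ 2 - 2 * (inner ℝ (x j) (x k) : ℝ) + ‖x k‖ ^ 2 := by
        rw [@norm_sub_sq_real]
      have h3 : δ ^ 2 ≤ ‖x j - x k‖ ^ 2 :=
        pow_le_pow_left₀ hδ.le (hsep j k hjk) 2
      have hj2 : ‖x j‖ ^ 2 = M ^ 2 := by rw [hM j]
      have hk2 : ‖x k‖ ^ 2 = M ^ 2 := by rw [hM k]
      linarith
    have hdiag : ∀ j : Fin N, (inner ℝ (x j) (x j) : ℝ) = M ^ 2 := by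
      intro j
      rw [real_inner_self_eq_norm_sq, hM j]
    -- bound ‖S‖^2
    have hSsq : ‖S‖ ^ 2 = ∑ j ∈ E, ∑ k ∈ E, (inner ℝ (x j) (x k) : ℝ) := by
      rw [← real_inner_self_eq_norm_sq, hS, sum_inner]
      exact Finset.sum_congr rfl fun j _ => inner_sum _ _ _
    have hbound : ‖S‖ ^ 2 ≤
        (N - 1 : ℕ) * M ^ 2 + ((N - 1 : ℕ) * (N - 2 : ℕ)) * (M ^ 2 - δ ^ 2 / 2) := by
      rw [hSsq]
      have step : ∀ j ∈ E, ∑ k ∈ E, (inner ℝ (x j) (x k) : ℝ) ≤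
          M ^ 2 + (N - 2 : ℕ) * (M ^ 2 - δ ^ 2 / 2) := by
        intro j hj
        have hsplit : ∑ k ∈ E, (inner ℝ (x j) (x k) : ℝ) =
            (inner ℝ (x j) (x j) : ℝ) + ∑ k ∈ E.erase j, (inner ℝ (x j) (x k) : ℝ) :=
          (Finset.add_sum_erase E _ hj).symm
        have hcard2 : (E.erase j).card = N - 2 := by
          rw [Finset.card_erase_of_mem hj, hcard]
          omega
        have hsum2 : ∑ k ∈ E.erase j, (inner ℝ (x j) (x k) : ℝ) ≤
            (N - 2 : ℕ) * (M ^ 2 - δ ^ 2 / 2) := by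
          calc ∑ k ∈ E.erase j, (inner ℝ (x j) (x k) : ℝ)
              ≤ (E.erase j).card • (M ^ 2 - δ ^ 2 / 2) := by
                apply Finset.sum_le_card_nsmul
                intro k hk
                exact hinner j k (Finset.ne_of_mem_erase hk).symm
            _ = (N - 2 : ℕ) * (M ^ 2 - δ ^ 2 / 2) := by
                rw [hcard2, nsmul_eq_mul]
        rw [hsplit, hdiag j]
        linarith
      calc ∑ j ∈ E, ∑ k ∈ E, (inner ℝ (x j) (x k) : ℝ)
          ≤ ∑ j ∈ E, (M ^ 2 + (N - 2 : ℕ) * (M ^ 2 - δ ^ 2 / 2)) :=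
            Finset.sum_le_sum step
        _ = (N - 1 : ℕ) * (M ^ 2 + (N - 2 : ℕ) * (M ^ 2 - δ ^ 2 / 2)) := by
            rw [Finset.sum_const, hcard, nsmul_eq_mul]
        _ = (N - 1 : ℕ) * M ^ 2 + ((N - 1 : ℕ) * (N - 2 : ℕ)) * (M ^ 2 - δ ^ 2 / 2) := by
            ring
    -- cast facts
    have hc1 : ((N - 1 : ℕ) : ℝ) = (N : ℝ) - 1 := by
      push_cast [Nat.cast_sub hN]
      ring
    have hc2 : ((N - 1 : ℕ) : ℝ) * ((N - 2 : ℕ) : ℝ) = ((N : ℝ) - 1) * ((N : ℝ) - 2) := by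
      rcases Nat.lt_or_ge N 2 with h | h
      · have e1 : N - 1 = 0 := by omega
        have e2 : N - 2 = 0 := by omega
        have e3 : N = 1 := by omega
        rw [e1, e2, e3]
        norm_num
      · rw [hc1, Nat.cast_sub h]
        push_cast
        ring
    have hNpos : (0 : ℝ) < N := Nat.cast_pos.mpr hN
    have hnorm : ‖(1 / (N : ℝ)) • S‖ ^ 2 ≤ ξ ^ 2 := by
      rw [norm_smul, Real.norm_eq_abs,
        abs_of_pos (show (0:ℝ) < 1 / N by positivity), mul_pow, hξ]
      have e1 : (1 / (N:ℝ)) ^ 2 * ‖S‖ ^ 2 = ‖S‖ ^ 2 / (N:ℝ) ^ 2 := by ring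
      have e2 : M ^ 2 * ((N:ℝ) - 1) / (N:ℝ) ^ 2 +
          (M ^ 2 - δ ^ 2 / 2) * (((N:ℝ) - 1) * ((N:ℝ) - 2)) / (N:ℝ) ^ 2 =
          (M ^ 2 * ((N:ℝ) - 1) + (M ^ 2 - δ ^ 2 / 2) * (((N:ℝ) - 1) * ((N:ℝ) - 2))) / (N:ℝ) ^ 2 := by
        ring
      rw [e1, e2]
      apply div_le_div_of_nonneg_right _ (by positivity)
      calc ‖S‖ ^ 2 ≤ (N - 1 : ℕ) * M ^ 2 + ((N - 1 : ℕ) * (N - 2 : ℕ)) * (M ^ 2 - δ ^ 2 / 2) := hbound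
        _ = M ^ 2 * ((N:ℝ) - 1) + (M ^ 2 - δ ^ 2 / 2) * (((N:ℝ) - 1) * ((N:ℝ) - 2)) := by
            rw [hc2, hc1]; ring
    exact le_of_pow_le_pow_left₀ (by norm_num) hξ0 hnorm
  · have h0 : Tendsto (fun n : ℕ => (1 : ℝ) / n) atTop (nhds 0) :=
      tendsto_one_div_atTop_nhds_zero_nat
    have key : Tendsto (fun n : ℕ =>
        M ^ 2 * ((1 : ℝ) / n) * (1 - 1 / n) +
        (M ^ 2 - δ ^ 2 / 2) * ((1 - 1 / n) * (1 - 2 * (1 / n)))) atTop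
        (nhds (M ^ 2 * 0 * (1 - 0) + (M ^ 2 - δ ^ 2 / 2) * ((1 - 0) * (1 - 2 * 0)))) := by
      apply Tendsto.add
      · exact ((tendsto_const_nhds.mul h0).mul (tendsto_const_nhds.sub h0))
      · exact tendsto_const_nhds.mul
          ((tendsto_const_nhds.sub h0).mul (tendsto_const_nhds.sub (tendsto_const_nhds.mul h0)))
    have key' := key
    rw [show M ^ 2 * 0 * (1 - 0) + (M ^ 2 - δ ^ 2 / 2) * ((1 - 0) * (1 - 2 * 0)) = M ^ 2 - δ ^ 2 / 2 by ring] at key'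
    apply key'.congr'
    filter_upwards [eventually_ge_atTop 1] with n hn
    have hn' : (0 : ℝ) < n := by exact_mod_cast hn
    field_simp
end
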